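/- Let f, g ∈ ℂ[[x_1,…,x_n]] be right equivalent via a ℂ-algebra automorphism φ of ℂ[[x_1,…,x_n]] with φ(f) = g, and let w ∈ ℕ^n be a weight such that f has maximal weighted filtration k (every monomial of f has w-degree ≥ k, and some monomial has w-degree exactly k). Suppose moreover that φ has filtration ≥ 0 with respect to w, and let φ_0^w be the automorphism sending each x_i to the part of φ(x_i) of w-degree exactly w-deg(x_i). If the weighted k-jet of f factorizes as w-jet(f,k) = f_1^{s_1} ⋯ f_t^{s_t}, then w-jet(g,k) = φ_0^w(f_1)^{s_1} ⋯ φ_0^w(f_t)^{s_t}. -/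

import Mathlib

set_option synthInstance.maxHeartbeats 1000000
set_option maxHeartbeats 1000000

/-- `f ∈ E_d^w`: every monomial of `f` has `w`-weighted degree at least `d`. -/
def MemE (n : ℕ) (w : Fin n → ℕ) (d : ℕ) (f : MvPowerSeries (Fin n) ℂ) : Prop :=
  ∀ m : Fin n →₀ ℕ, MvPowerSeries.coeff m f ≠ 0 → d ≤ ∑ j, w j * m j

/-- The weighted `k`-jet of `f`: the sum of the terms of `f` of `w`-degree at most `k`. -/
noncomputable def wjet (n : ℕ) (w : Fin n → ℕ) (k : ℕ) (f : MvPowerSeries (Fin n) ℂ) :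
    MvPowerSeries (Fin n) ℂ :=
  fun m => if ∑ j, w j * m j ≤ k then MvPowerSeries.coeff m f else 0

/-- The part of `f` of `w`-degree exactly `e`. -/
noncomputable def wcomp (n : ℕ) (w : Fin n → ℕ) (e : ℕ) (f : MvPowerSeries (Fin n) ℂ) :
    MvPowerSeries (Fin n) ℂ :=
  fun m => if ∑ j, w j * m j = e then MvPowerSeries.coeff m f else 0

namespace PPF

open MvPowerSeries Finsupp

variable {n : ℕ}

/-- weighted degree -/
def wdeg (w : Fin n → ℕ) (m : Fin n →₀ ℕ) : ℕ := ∑ j, w j * m j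

/-- total degree -/
def tdeg (m : Fin n →₀ ℕ) : ℕ := ∑ j, m j

theorem coeff_wjet (w : Fin n → ℕ) (k : ℕ) (f : MvPowerSeries (Fin n) ℂ) (m : Fin n →₀ ℕ) :
    MvPowerSeries.coeff m (wjet n w k f) =
      if wdeg w m ≤ k then MvPowerSeries.coeff m f else 0 := rfl

theorem coeff_wcomp (w : Fin n → ℕ) (e : ℕ) (f : MvPowerSeries (Fin n) ℂ) (m : Fin n →₀ ℕ) :
    MvPowerSeries.coeff m (wcomp n w e f) =
      if wdeg w m = e then MvPowerSeries.coeff m f else 0 := rfl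

theorem memE_def {w : Fin n → ℕ} {d : ℕ} {f : MvPowerSeries (Fin n) ℂ} :
    MemE n w d f ↔ ∀ m, MvPowerSeries.coeff m f ≠ 0 → d ≤ wdeg w m := Iff.rfl

theorem wdeg_add (w : Fin n → ℕ) (p q : Fin n →₀ ℕ) :
    wdeg w (p + q) = wdeg w p + wdeg w q := by
  simp [wdeg, Finsupp.add_apply, mul_add, Finset.sum_add_distrib]

theorem tdeg_add (p q : Fin n →₀ ℕ) : tdeg (p + q) = tdeg p + tdeg q := by
  simp [tdeg, Finsupp.add_apply, Finset.sum_add_distrib]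

theorem tdeg_eq_zero {m : Fin n →₀ ℕ} (h : tdeg m = 0) : m = 0 := by
  ext j
  simpa using Finset.sum_eq_zero_iff.mp h j (Finset.mem_univ j)

theorem wdeg_zero (w : Fin n → ℕ) : wdeg w 0 = 0 := by simp [wdeg]

theorem tdeg_zero : tdeg (0 : Fin n →₀ ℕ) = 0 := by simp [tdeg]

theorem wdeg_single (w : Fin n → ℕ) (i : Fin n) : wdeg w (Finsupp.single i 1) = w i := by
  simp [wdeg, Finsupp.single_apply]

/-! ### multiplicativity of weighted lowest-order parts -/

theorem memE_mul {w : Fin n → ℕ} {a b : ℕ} {A B : MvPowerSeries (Fin n) ℂ}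
    (hA : MemE n w a A) (hB : MemE n w b B) : MemE n w (a + b) (A * B) := by
  intro m hm
  rw [MvPowerSeries.coeff_mul] at hm
  obtain ⟨p, hp, hne⟩ := Finset.exists_ne_zero_of_sum_ne_zero hm
  rw [Finset.HasAntidiagonal.mem_antidiagonal] at hp
  have h1 : a ≤ wdeg w p.1 := hA _ (left_ne_zero_of_mul hne)
  have h2 : b ≤ wdeg w p.2 := hB _ (right_ne_zero_of_mul hne)
  have h3 := wdeg_add w p.1 p.2
  rw [hp] at h3
  show a + b ≤ wdeg w m
  omega

theorem memE_add {w : Fin n → ℕ} {d : ℕ} {A B : MvPowerSeries (Fin n) ℂ}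
    (hA : MemE n w d A) (hB : MemE n w d B) : MemE n w d (A + B) := by
  intro m hm
  rw [map_add] at hm
  by_cases h1 : MvPowerSeries.coeff m A = 0
  · exact hB m (by rw [h1, zero_add] at hm; exact hm)
  · exact hA m h1

theorem wcomp_mul {w : Fin n → ℕ} {a b : ℕ} {A B : MvPowerSeries (Fin n) ℂ}
    (hA : MemE n w a A) (hB : MemE n w b B) :
    wcomp n w (a + b) (A * B) = wcomp n w a A * wcomp n w b B := by
  apply MvPowerSeries.ext
  intro m
  rw [coeff_wcomp, MvPowerSeries.coeff_mul, MvPowerSeries.coeff_mul]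
  by_cases h : wdeg w m = a + b
  · rw [if_pos h]
    refine Finset.sum_congr rfl fun p hp => ?_
    rw [Finset.HasAntidiagonal.mem_antidiagonal] at hp
    have hsum : wdeg w p.1 + wdeg w p.2 = a + b := by rw [← wdeg_add, hp, h]
    rw [coeff_wcomp, coeff_wcomp]
    by_cases h1 : wdeg w p.1 = a
    · have h2 : wdeg w p.2 = b := by omega
      rw [if_pos h1, if_pos h2]
    · rw [if_neg h1, zero_mul]
      by_cases hA1 : MvPowerSeries.coeff p.1 A = 0
      · rw [hA1, zero_mul]
      · have hwa : a ≤ wdeg w p.1 := hA _ hA1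
        have h2 : wdeg w p.2 < b := by omega
        have hB0 : MvPowerSeries.coeff p.2 B = 0 := by
          by_contra hB1
          have hwb : b ≤ wdeg w p.2 := hB _ hB1
          omega
        rw [hB0, mul_zero]
  · rw [if_neg h]
    symm
    refine Finset.sum_eq_zero fun p hp => ?_
    rw [Finset.HasAntidiagonal.mem_antidiagonal] at hp
    rw [coeff_wcomp, coeff_wcomp]
    by_cases h1 : wdeg w p.1 = a
    · by_cases h2 : wdeg w p.2 = b
      · exact absurd (by rw [← hp, wdeg_add, h1, h2]) h
      · rw [if_neg h2, mul_zero]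
    · rw [if_neg h1, zero_mul]

theorem memE_zero_one {w : Fin n → ℕ} : MemE n w 0 1 := fun _ _ => Nat.zero_le _

theorem wcomp_zero_one {w : Fin n → ℕ} : wcomp n w 0 1 = 1 := by
  apply MvPowerSeries.ext
  intro m
  rw [coeff_wcomp, MvPowerSeries.coeff_one]
  by_cases hm : m = 0
  · subst hm; simp [wdeg_zero]
  · simp [hm]

theorem memE_pow {w : Fin n → ℕ} {a : ℕ} {A : MvPowerSeries (Fin n) ℂ}
    (hA : MemE n w a A) (s : ℕ) : MemE n w (s * a) (A ^ s) := by
  induction s with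
  | zero => simpa using memE_zero_one
  | succ s ih =>
      have h2 := memE_mul ih hA
      rw [pow_succ]
      have he : (s + 1) * a = s * a + a := by ring
      rw [he]
      exact h2

theorem wcomp_pow {w : Fin n → ℕ} {a : ℕ} {A : MvPowerSeries (Fin n) ℂ}
    (hA : MemE n w a A) (s : ℕ) : wcomp n w (s * a) (A ^ s) = (wcomp n w a A) ^ s := by
  induction s with
  | zero => simpa using wcomp_zero_one
  | succ s ih =>
      have he : (s + 1) * a = s * a + a := by ring
      rw [pow_succ, pow_succ, ← ih, ← wcomp_mul (memE_pow hA s) hA, he]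

theorem memE_prod {w : Fin n → ℕ} {ι : Type*} (s : Finset ι)
    (A : ι → MvPowerSeries (Fin n) ℂ) (a : ι → ℕ) (h : ∀ i ∈ s, MemE n w (a i) (A i)) :
    MemE n w (∑ i ∈ s, a i) (∏ i ∈ s, A i) := by
  induction s using Finset.cons_induction with
  | empty => simpa using memE_zero_one
  | cons i s his ih =>
      rw [Finset.prod_cons, Finset.sum_cons]
      exact memE_mul (h i (Finset.mem_cons_self i s))
        (ih fun j hj => h j (Finset.mem_cons_of_mem hj))

theorem wcomp_prod {w : Fin n → ℕ} {ι : Type*} (s : Finset ι)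
    (A : ι → MvPowerSeries (Fin n) ℂ) (a : ι → ℕ) (h : ∀ i ∈ s, MemE n w (a i) (A i)) :
    wcomp n w (∑ i ∈ s, a i) (∏ i ∈ s, A i) = ∏ i ∈ s, wcomp n w (a i) (A i) := by
  induction s using Finset.cons_induction with
  | empty => simpa using wcomp_zero_one
  | cons i s his ih =>
      rw [Finset.prod_cons, Finset.sum_cons,
        wcomp_mul (h i (Finset.mem_cons_self i s))
          (memE_prod s A a fun j hj => h j (Finset.mem_cons_of_mem hj)),
        ih fun j hj => h j (Finset.mem_cons_of_mem hj), Finset.prod_cons]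

/-! ### continuity of algebra endomorphisms -/

/-- the maximal ideal of series with zero constant coefficient -/
noncomputable def I0 (n : ℕ) : Ideal (MvPowerSeries (Fin n) ℂ) :=
  RingHom.ker (MvPowerSeries.constantCoeff)

/-- the ideal generated by the variables -/
noncomputable def JX (n : ℕ) : Ideal (MvPowerSeries (Fin n) ℂ) :=
  Ideal.span (Set.range (MvPowerSeries.X : Fin n → MvPowerSeries (Fin n) ℂ))

theorem coeff_eq_zero_of_mem_I0_pow :
    ∀ (N : ℕ) (F : MvPowerSeries (Fin n) ℂ), F ∈ (I0 n) ^ N →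
      ∀ m : Fin n →₀ ℕ, tdeg m < N → MvPowerSeries.coeff m F = 0 := by
  intro N
  induction N with
  | zero => intro F _ m hm; omega
  | succ N ih =>
      intro F hF
      rw [pow_succ] at hF
      refine Submodule.mul_induction_on hF ?_ ?_
      · intro a ha b hb m hm
        rw [MvPowerSeries.coeff_mul]
        refine Finset.sum_eq_zero fun p hp => ?_
        rw [Finset.HasAntidiagonal.mem_antidiagonal] at hp
        by_cases h1 : tdeg p.1 < N
        · rw [ih a ha p.1 h1, zero_mul]
        · have hsum : tdeg p.1 + tdeg p.2 = tdeg m := by rw [← tdeg_add, hp]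
          have h2 : p.2 = 0 := tdeg_eq_zero (by omega)
          rw [h2, MvPowerSeries.coeff_zero_eq_constantCoeff]
          rw [I0, RingHom.mem_ker] at hb
          rw [hb, mul_zero]
      · intro x y hx hy m hm
        rw [map_add, hx m hm, hy m hm, add_zero]

/-- the remainder pieces used to decompose a series of positive order -/
noncomputable def rpart (i : Fin n) (F : MvPowerSeries (Fin n) ℂ) :
    MvPowerSeries (Fin n) ℂ :=
  fun m => if ∀ j, j < i → m j = 0 then MvPowerSeries.coeff (m + Finsupp.single i 1) F else 0

theorem coeff_rpart (i : Fin n) (F : MvPowerSeries (Fin n) ℂ) (m : Fin n →₀ ℕ) :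
    MvPowerSeries.coeff m (rpart i F) =
      if ∀ j, j < i → m j = 0 then MvPowerSeries.coeff (m + Finsupp.single i 1) F else 0 := rfl

theorem decomp (F : MvPowerSeries (Fin n) ℂ) (h0 : MvPowerSeries.coeff 0 F = 0) :
    F = ∑ i, MvPowerSeries.X i * rpart i F := by
  apply MvPowerSeries.ext
  intro m
  rw [map_sum]
  have hterm : ∀ i : Fin n, MvPowerSeries.coeff m (MvPowerSeries.X i * rpart i F) =
      if Finsupp.single i 1 ≤ m then MvPowerSeries.coeff (m - Finsupp.single i 1) (rpart i F)
      else 0 := by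
    intro i
    rw [MvPowerSeries.X, MvPowerSeries.coeff_monomial_mul]
    simp
  by_cases hm : m = 0
  · subst hm
    rw [h0]
    refine (Finset.sum_eq_zero fun i _ => ?_).symm
    rw [hterm i, if_neg]
    intro hle
    have := hle i
    simp [Finsupp.single_apply] at this
  · have hsupp : m.support.Nonempty := Finsupp.support_nonempty_iff.mpr hm
    set i0 := m.support.min' hsupp with hi0
    have hi0mem : i0 ∈ m.support := m.support.min'_mem hsupp
    have hmi0 : m i0 ≠ 0 := Finsupp.mem_support_iff.mp hi0mem
    rw [Finset.sum_eq_single i0]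
    · rw [hterm i0, if_pos (Finsupp.single_le_iff.mpr (Nat.one_le_iff_ne_zero.mpr hmi0)),
        coeff_rpart, if_pos, tsub_add_cancel_of_le
          (Finsupp.single_le_iff.mpr (Nat.one_le_iff_ne_zero.mpr hmi0))]
      intro j hj
      rw [Finsupp.tsub_apply]
      have hns : j ∉ m.support := fun hmem => absurd (m.support.min'_le j hmem) (by
        rw [← hi0]; exact not_le.mpr hj)
      have hmj : m j = 0 := Finsupp.notMem_support_iff.mp hns
      simp [hmj]
    · intro i _ hne
      rw [hterm i]
      by_cases hle : Finsupp.single i 1 ≤ m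
      · rw [if_pos hle, coeff_rpart, if_neg]
        intro hall
        have hmi : m i ≠ 0 := by
          have := Finsupp.single_le_iff.mp hle
          omega
        have himem : i ∈ m.support := Finsupp.mem_support_iff.mpr hmi
        have h1 : i0 ≤ i := m.support.min'_le i himem
        have hlt : i0 < i := lt_of_le_of_ne h1 (Ne.symm hne)
        have hcontra := hall i0 hlt
        rw [Finsupp.tsub_apply] at hcontra
        have hsing : Finsupp.single i 1 i0 = 0 := by
          rw [Finsupp.single_apply, if_neg]
          exact hne
        omega
      · rw [if_neg hle]
    · intro h
      exact absurd (Finset.mem_univ i0) h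

theorem mem_JX_pow :
    ∀ (N : ℕ) (F : MvPowerSeries (Fin n) ℂ),
      (∀ m : Fin n →₀ ℕ, tdeg m < N → MvPowerSeries.coeff m F = 0) → F ∈ (JX n) ^ N := by
  intro N
  induction N with
  | zero => intro F _; simp [Ideal.one_eq_top]
  | succ N ih =>
      intro F hF
      have h0 : MvPowerSeries.coeff 0 F = 0 := hF 0 (by simp [tdeg])
      rw [decomp F h0, pow_succ]
      refine Ideal.sum_mem _ fun i _ => ?_
      rw [mul_comm (MvPowerSeries.X i)]
      refine Ideal.mul_mem_mul (ih (rpart i F) ?_) (Ideal.subset_span ⟨i, rfl⟩)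
      intro m hm
      rw [coeff_rpart]
      split
      · apply hF
        rw [tdeg_add]
        have : tdeg (Finsupp.single i 1) = 1 := by
          simp [tdeg, Finsupp.single_apply]
        omega
      · rfl

/-- continuity: an algebra endomorphism sending the variables into the maximal ideal
preserves high order. -/
theorem cont (α : MvPowerSeries (Fin n) ℂ →ₐ[ℂ] MvPowerSeries (Fin n) ℂ)
    (hα : ∀ i, MvPowerSeries.constantCoeff (α (MvPowerSeries.X i)) = 0)
    (N : ℕ) (F : MvPowerSeries (Fin n) ℂ)
    (hF : ∀ m : Fin n →₀ ℕ, tdeg m < N → MvPowerSeries.coeff m F = 0)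
    (m : Fin n →₀ ℕ) (hm : tdeg m < N) : MvPowerSeries.coeff m (α F) = 0 := by
  have h1 : F ∈ (JX n) ^ N := mem_JX_pow N F hF
  have h2 : α F ∈ Ideal.map α.toRingHom ((JX n) ^ N) := Ideal.mem_map_of_mem _ h1
  rw [Ideal.map_pow] at h2
  have h3 : Ideal.map α.toRingHom (JX n) ≤ I0 n := by
    rw [JX, Ideal.map_span, Ideal.span_le]
    rintro x ⟨y, ⟨i, rfl⟩, rfl⟩
    rw [SetLike.mem_coe, I0, RingHom.mem_ker]
    exact hα i
  exact coeff_eq_zero_of_mem_I0_pow N (α F) (Ideal.pow_right_mono h3 N h2) m hm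

/-! ### monomials as products of variables -/

theorem prod_X_pow (m : Fin n →₀ ℕ) :
    (∏ i, (MvPowerSeries.X i : MvPowerSeries (Fin n) ℂ) ^ m i) =
      MvPowerSeries.monomial m 1 := by
  have h : ∀ s : Finset (Fin n),
      (∏ i ∈ s, (MvPowerSeries.X i : MvPowerSeries (Fin n) ℂ) ^ m i) =
        MvPowerSeries.monomial (∑ i ∈ s, Finsupp.single i (m i)) 1 := by
    intro s
    induction s using Finset.cons_induction with
    | empty => simp
    | cons i s his ih =>
        rw [Finset.prod_cons, Finset.sum_cons, ih, MvPowerSeries.X_pow_eq,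
          MvPowerSeries.monomial_mul_monomial, one_mul]
  have hsum : (∑ i, Finsupp.single i (m i)) = m := by
    ext j
    rw [Finset.sum_apply']
    simp [Finsupp.single_apply]
  rw [h Finset.univ, hsum]

theorem monomial_eq_smul (m : Fin n →₀ ℕ) (c : ℂ) :
    MvPowerSeries.monomial m c = c • MvPowerSeries.monomial m 1 := by
  rw [← (MvPowerSeries.monomial m).map_smul, smul_eq_mul, mul_one]

/-! ### linearity of wjet -/

theorem wjet_add (w : Fin n → ℕ) (k : ℕ) (F G : MvPowerSeries (Fin n) ℂ) :
    wjet n w k (F + G) = wjet n w k F + wjet n w k G := by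
  apply MvPowerSeries.ext
  intro m
  rw [map_add, coeff_wjet, coeff_wjet, coeff_wjet, map_add]
  split <;> simp

theorem wjet_smul (w : Fin n → ℕ) (k : ℕ) (c : ℂ) (F : MvPowerSeries (Fin n) ℂ) :
    wjet n w k (c • F) = c • wjet n w k F := by
  apply MvPowerSeries.ext
  intro m
  rw [MvPowerSeries.coeff_smul, coeff_wjet, coeff_wjet, MvPowerSeries.coeff_smul]
  split <;> simp

theorem wjet_zero (w : Fin n → ℕ) (k : ℕ) : wjet n w k 0 = 0 := by
  apply MvPowerSeries.ext
  intro m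
  rw [coeff_wjet]
  split <;> simp

theorem wjet_sum (w : Fin n → ℕ) (k : ℕ) {ι : Type*} (s : Finset ι)
    (G : ι → MvPowerSeries (Fin n) ℂ) :
    wjet n w k (∑ i ∈ s, G i) = ∑ i ∈ s, wjet n w k (G i) := by
  induction s using Finset.cons_induction with
  | empty => simpa using wjet_zero w k
  | cons i s his ih => rw [Finset.sum_cons, Finset.sum_cons, wjet_add, ih]

theorem wjet_eq_zero_of_memE {w : Fin n → ℕ} {k : ℕ} {F : MvPowerSeries (Fin n) ℂ}
    (h : MemE n w (k + 1) F) : wjet n w k F = 0 := by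
  apply MvPowerSeries.ext
  intro m
  rw [coeff_wjet, map_zero]
  split
  · rename_i hle
    by_contra hne
    have hge : k + 1 ≤ wdeg w m := h m hne
    omega
  · rfl

theorem wjet_eq_wcomp_of_memE {w : Fin n → ℕ} {k : ℕ} {F : MvPowerSeries (Fin n) ℂ}
    (h : MemE n w k F) : wjet n w k F = wcomp n w k F := by
  apply MvPowerSeries.ext
  intro m
  rw [coeff_wjet, coeff_wcomp]
  by_cases hle : wdeg w m ≤ k
  · rw [if_pos hle]
    by_cases heq : wdeg w m = k
    · rw [if_pos heq]
    · rw [if_neg heq]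
      by_contra hne
      have hge : k ≤ wdeg w m := h m hne
      exact heq (le_antisymm hle hge)
  · rw [if_neg hle, if_neg (fun heq => hle (le_of_eq heq))]

theorem memE_X {w : Fin n → ℕ} (i : Fin n) : MemE n w (w i) (MvPowerSeries.X i) := by
  intro m hm
  rw [MvPowerSeries.coeff_X] at hm
  split at hm
  · rename_i h
    subst h
    rw [show (∑ j, w j * (Finsupp.single i 1) j) = wdeg w (Finsupp.single i 1) from rfl,
      wdeg_single]
  · exact absurd rfl hm

end PPF

open PPF MvPowerSeries in
/-- Factorization of the weighted principal part is preserved under right equivalence: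
if `φ(f) = g`, `f` has maximal weighted filtration `k`, `φ` has filtration `≥ 0`, and
`ψ = φ₀^w` is the algebra morphism sending each `x_i` to the part of `φ(x_i)` of
`w`-degree exactly `w-deg(x_i)`, then a factorization
`w-jet(f,k) = f₁^{s₁} ⋯ f_t^{s_t}` yields
`w-jet(g,k) = ψ(f₁)^{s₁} ⋯ ψ(f_t)^{s_t}`. -/
theorem principal_part_factorization (n : ℕ) (w : Fin n → ℕ) (k : ℕ)
    (f g : MvPowerSeries (Fin n) ℂ)
    (φ : MvPowerSeries (Fin n) ℂ ≃ₐ[ℂ] MvPowerSeries (Fin n) ℂ)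
    (hφf : φ f = g)
    (hfk : MemE n w k f)
    (hmax : ∃ m : Fin n →₀ ℕ, MvPowerSeries.coeff m f ≠ 0 ∧ ∑ j, w j * m j = k)
    (hφ : ∀ (l : ℕ) (h : MvPowerSeries (Fin n) ℂ), MemE n w l h → MemE n w l (φ h - h))
    (ψ : MvPowerSeries (Fin n) ℂ →ₐ[ℂ] MvPowerSeries (Fin n) ℂ)
    (hψ : ∀ i : Fin n, ψ (MvPowerSeries.X i) = wcomp n w (w i) (φ (MvPowerSeries.X i)))
    (t : ℕ) (F : Fin t → MvPowerSeries (Fin n) ℂ) (s : Fin t → ℕ)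
    (hfact : wjet n w k f = ∏ i, F i ^ s i) :
    wjet n w k g = ∏ i, ψ (F i) ^ s i := by
  classical
  have hφ0 : ∀ i : Fin n, constantCoeff (φ (MvPowerSeries.X i)) = 0 := by
    intro i
    by_contra hne
    have hu : IsUnit (constantCoeff (φ (MvPowerSeries.X i))) :=
      isUnit_iff_ne_zero.mpr hne
    have hu2 : IsUnit (φ (MvPowerSeries.X i)) :=
      MvPowerSeries.isUnit_iff_constantCoeff.mpr hu
    have hu3 : IsUnit (MvPowerSeries.X i : MvPowerSeries (Fin n) ℂ) := by
      have h := hu2.map φ.symm.toAlgHom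
      simpa using h
    have h0 := MvPowerSeries.isUnit_iff_constantCoeff.mp hu3
    rw [MvPowerSeries.constantCoeff_X] at h0
    exact h0.ne_zero rfl
  have hψ0 : ∀ i : Fin n, constantCoeff (ψ (MvPowerSeries.X i)) = 0 := by
    intro i
    rw [hψ i, ← MvPowerSeries.coeff_zero_eq_constantCoeff_apply, coeff_wcomp, wdeg_zero]
    split
    · rw [MvPowerSeries.coeff_zero_eq_constantCoeff_apply]
      exact hφ0 i
    · rfl
  have hA : ∀ i : Fin n, MemE n w (w i) (φ (MvPowerSeries.X i)) := by
    intro i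
    have h1 := memE_X (w := w) i
    have h2 := hφ (w i) (MvPowerSeries.X i) h1
    have h3 := memE_add h1 h2
    rwa [show MvPowerSeries.X i + (φ (MvPowerSeries.X i) - MvPowerSeries.X i)
      = φ (MvPowerSeries.X i) by ring] at h3
  have key : ∀ (m : Fin n →₀ ℕ) (c : ℂ), wdeg w m = k →
      wjet n w k (φ (MvPowerSeries.monomial m c)) = ψ (MvPowerSeries.monomial m c) := by
    intro m c hmk
    have hmon : MvPowerSeries.monomial m c
        = c • ∏ i, (MvPowerSeries.X i : MvPowerSeries (Fin n) ℂ) ^ m i := by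
      rw [prod_X_pow, monomial_eq_smul]
    rw [hmon, map_smul, map_smul, wjet_smul, map_prod, map_prod]
    simp_rw [map_pow]
    congr 1
    have hE : ∀ i ∈ Finset.univ, MemE n w (m i * w i) ((φ (MvPowerSeries.X i)) ^ m i) :=
      fun i _ => memE_pow (hA i) (m i)
    have hsum : (∑ i, m i * w i) = k := by
      rw [← hmk]
      exact Finset.sum_congr rfl fun i _ => mul_comm _ _
    have h1 : MemE n w k (∏ i, (φ (MvPowerSeries.X i)) ^ m i) := by
      rw [← hsum]; exact memE_prod _ _ _ hE
    rw [wjet_eq_wcomp_of_memE h1, ← hsum, wcomp_prod _ _ _ hE]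
    exact Finset.prod_congr rfl fun i _ => by rw [wcomp_pow (hA i) (m i), ← hψ i]
  have hprod : (∏ i, ψ (F i) ^ s i) = ψ (wjet n w k f) := by
    rw [hfact, map_prod]
    exact Finset.prod_congr rfl fun i _ => (map_pow ψ (F i) (s i)).symm
  rw [hprod]
  set P := wjet n w k f with hPdef
  have hPco : ∀ m, MvPowerSeries.coeff m P
      = if wdeg w m ≤ k then MvPowerSeries.coeff m f else 0 :=
    fun m => coeff_wjet w k f m
  have hPhom : ∀ m, MvPowerSeries.coeff m P ≠ 0 → wdeg w m = k := by
    intro m hm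
    rw [hPco m] at hm
    split at hm
    · rename_i hle
      have hge : k ≤ wdeg w m := hfk m hm
      omega
    · exact absurd rfl hm
  have hr0 : MemE n w (k + 1) (f - P) := by
    intro m hm
    rw [map_sub, hPco m] at hm
    by_cases hle : wdeg w m ≤ k
    · rw [if_pos hle, sub_self] at hm
      exact absurd rfl hm
    · show k + 1 ≤ wdeg w m
      omega
  have hgsplit : g = φ P + φ (f - P) := by
    rw [← map_add, show P + (f - P) = f by ring, hφf]
  have hstep1 : wjet n w k g = wjet n w k (φ P) := by
    rw [hgsplit, wjet_add]
    have h2 := hφ (k + 1) (f - P) hr0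
    have h3 := memE_add hr0 h2
    rw [show (f - P) + (φ (f - P) - (f - P)) = φ (f - P) by ring] at h3
    rw [wjet_eq_zero_of_memE h3, add_zero]
  rw [hstep1]
  apply MvPowerSeries.ext
  intro m0
  set N := tdeg m0 + 1 with hN
  have hm0N : tdeg m0 < N := by omega
  set b : Fin n →₀ ℕ := Finsupp.equivFunOnFinite.symm (fun _ => N) with hb
  have hbmem : ∀ m : Fin n →₀ ℕ, tdeg m < N → m ∈ Finset.Iic b := by
    intro m hm
    rw [Finset.mem_Iic, Finsupp.le_def]
    intro j
    have h1 : m j ≤ tdeg m :=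
      Finset.single_le_sum (fun i _ => Nat.zero_le (m i)) (Finset.mem_univ j)
    have h2 : b j = N := by simp [hb]
    omega
  set T : Finset (Fin n →₀ ℕ) := (Finset.Iic b).filter (fun m => tdeg m < N) with hT
  set Q : MvPowerSeries (Fin n) ℂ :=
    ∑ m ∈ T, MvPowerSeries.monomial m (MvPowerSeries.coeff m P) with hQ
  have hQco : ∀ m, MvPowerSeries.coeff m Q
      = if tdeg m < N then MvPowerSeries.coeff m P else 0 := by
    intro m
    rw [hQ, map_sum]
    simp_rw [MvPowerSeries.coeff_monomial]
    rw [Finset.sum_ite_eq]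
    by_cases hm : tdeg m < N
    · rw [if_pos (Finset.mem_filter.mpr ⟨hbmem m hm, hm⟩), if_pos hm]
    · have hnot : m ∉ T := fun hmem => hm (Finset.mem_filter.mp hmem).2
      rw [if_neg hnot, if_neg hm]
  have hrN : ∀ m, tdeg m < N → MvPowerSeries.coeff m (P - Q) = 0 := by
    intro m hm
    rw [map_sub, hQco m, if_pos hm, sub_self]
  have hQkey : wjet n w k (φ Q) = ψ Q := by
    rw [hQ, map_sum, map_sum, wjet_sum]
    refine Finset.sum_congr rfl fun m hmT => ?_
    by_cases hc : MvPowerSeries.coeff m P = 0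
    · rw [hc, map_zero, map_zero, map_zero, wjet_zero]
    · exact key m _ (hPhom m hc)
  have e1 : MvPowerSeries.coeff m0 (wjet n w k (φ P))
      = MvPowerSeries.coeff m0 (wjet n w k (φ Q)) := by
    have h4 : φ P = φ Q + φ (P - Q) := by
      rw [← map_add, show Q + (P - Q) = P by ring]
    rw [h4, wjet_add, map_add]
    have h5 : MvPowerSeries.coeff m0 (φ (P - Q)) = 0 := by
      have h := cont φ.toAlgHom (fun i => hφ0 i) N (P - Q) hrN m0 hm0N
      exact h
    have h6 : MvPowerSeries.coeff m0 (wjet n w k (φ (P - Q))) = 0 := by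
      rw [coeff_wjet, h5]
      split <;> rfl
    rw [h6, add_zero]
  have e2 : MvPowerSeries.coeff m0 (ψ P) = MvPowerSeries.coeff m0 (ψ Q) := by
    have h4 : ψ P = ψ Q + ψ (P - Q) := by
      rw [← map_add, show Q + (P - Q) = P by ring]
    rw [h4, map_add, cont ψ hψ0 N (P - Q) hrN m0 hm0N, add_zero]
  rw [e1, e2, hQkey]
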